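/- With A and D as above, if u ∈ A satisfies δ_j(u) = 0 for all j ∈ J, then u = D(v) + λ for some v ∈ A and λ ∈ ℂ. In other words, the kernel of the variational derivative equals D(A) ⊕ ℂ·1. -/

import Mathlib

open MvPolynomial

/-- The polynomial algebra `A = ℂ[ψ_j^{(n)}]` in commuting formal variables. -/
abbrev FormalAlg (J : Type) := MvPolynomial (J × ℕ) ℂ

/-- The derivation `D` with `D(ψ_j^{(n)}) = ψ_j^{(n+1)}`. -/
noncomputable def Dop (J : Type) : Derivation ℂ (FormalAlg J) (FormalAlg J) :=
  mkDerivation ℂ (fun p => X (p.1, p.2 + 1))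

/-- The variational operator `δ_j = Σ_{n≥0} (-D)^n ∘ ∂/∂ψ_j^{(n)}`. -/
noncomputable def varOp (J : Type) (j : J) (u : FormalAlg J) : FormalAlg J :=
  ∑ᶠ n : ℕ, ((-1 : ℂ) ^ n) • (⇑(Dop J))^[n] (pderiv (j, n) u)

namespace VarAux

variable {J : Type}

lemma Dop_X (p : J × ℕ) : Dop J (X p) = X (p.1, p.2 + 1) :=
  mkDerivation_X ℂ _ p

lemma sub_single_add_single (s : (J × ℕ) →₀ ℕ) (p : J × ℕ) (hp : s p ≠ 0) :
    (s - Finsupp.single p 1) + Finsupp.single p 1 = s := by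
  classical
  ext a
  simp only [Finsupp.add_apply, Finsupp.tsub_apply, Finsupp.single_apply]
  have hp' : s p ≠ 0 := hp
  split_ifs with hpa
  · subst hpa; omega
  · omega

lemma degree_add_single (t : (J × ℕ) →₀ ℕ) (p : J × ℕ) :
    (t + Finsupp.single p 1).degree = t.degree + 1 := by
  classical
  simp only [Finsupp.degree_eq_weight_one, map_add]
  congr 1
  simp [Finsupp.weight_apply, Finsupp.sum_single_index]

lemma degree_sub_single (s : (J × ℕ) →₀ ℕ) (p : J × ℕ) (hp : s p ≠ 0) :
    (s - Finsupp.single p 1).degree + 1 = s.degree := by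
  conv_rhs => rw [← sub_single_add_single s p hp]
  rw [degree_add_single]

lemma hC_monomial (d : ℕ) (s : (J × ℕ) →₀ ℕ) (a : ℂ) :
    homogeneousComponent d (monomial s a) =
      if d = s.degree then monomial s a else 0 :=
  homogeneousComponent_of_mem
    ((mem_homogeneousSubmodule _ _).mpr (isHomogeneous_monomial a rfl))

/-- `D` maps a monomial to a homogeneous polynomial of the same degree. -/
lemma Dop_monomial_isHomogeneous (s : (J × ℕ) →₀ ℕ) (a : ℂ) :
    (Dop J (monomial s a)).IsHomogeneous s.degree := by
  classical
  rw [show (Dop J : Derivation ℂ (FormalAlg J) (FormalAlg J)) =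
      mkDerivation ℂ (fun p : J × ℕ => X (p.1, p.2 + 1)) from rfl,
    mkDerivation_monomial, Finsupp.sum]
  rw [← mem_homogeneousSubmodule]
  apply Submodule.smul_mem
  apply Submodule.sum_mem
  intro p hp
  have hps : s p ≠ 0 := Finsupp.mem_support_iff.mp hp
  rw [mem_homogeneousSubmodule]
  show ((monomial (s - Finsupp.single p 1) ((s p : ℂ))) •
      (X (p.1, p.2 + 1) : FormalAlg J)).IsHomogeneous s.degree
  have heq : (monomial (s - Finsupp.single p 1) ((s p : ℂ))) •
      (X (p.1, p.2 + 1) : FormalAlg J) =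
      monomial ((s - Finsupp.single p 1) + Finsupp.single (p.1, p.2 + 1) 1) (s p : ℂ) := by
    rw [smul_eq_mul, X, monomial_mul, mul_one]
  rw [heq]
  apply isHomogeneous_monomial
  rw [degree_add_single]
  exact degree_sub_single s p hps

lemma hC_Dop (d : ℕ) (φ : FormalAlg J) :
    homogeneousComponent d (Dop J φ) = Dop J (homogeneousComponent d φ) := by
  induction φ using MvPolynomial.induction_on' with
  | add p q hp hq => simp only [map_add, hp, hq]
  | monomial s a =>
    rw [hC_monomial,
      homogeneousComponent_of_mem
        ((mem_homogeneousSubmodule _ _).mpr (Dop_monomial_isHomogeneous s a))]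
    split_ifs <;> simp

lemma hC_pderiv (d : ℕ) (p : J × ℕ) (φ : FormalAlg J) :
    homogeneousComponent d (pderiv p φ) = pderiv p (homogeneousComponent (d + 1) φ) := by
  induction φ using MvPolynomial.induction_on' with
  | add q r hq hr => simp only [map_add, hq, hr]
  | monomial s a =>
    rw [pderiv_monomial, hC_monomial, hC_monomial]
    by_cases hsp : s p = 0
    · rw [apply_ite (⇑(pderiv (R := ℂ) p)), pderiv_monomial]
      simp [hsp]
    · have hdeg := degree_sub_single s p hsp
      by_cases h : d + 1 = s.degree
      · rw [if_pos (by omega), if_pos h, pderiv_monomial]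
      · rw [if_neg (by omega), if_neg h, map_zero]

lemma hC_Dop_iter (d n : ℕ) (φ : FormalAlg J) :
    homogeneousComponent d ((⇑(Dop J))^[n] φ) = (⇑(Dop J))^[n] (homogeneousComponent d φ) := by
  induction n generalizing φ with
  | zero => rfl
  | succ n ih =>
    rw [Function.iterate_succ_apply, Function.iterate_succ_apply, ih, hC_Dop]

lemma varOp_term_support (j : J) (u : FormalAlg J) :
    (Function.support fun n : ℕ =>
        ((-1 : ℂ) ^ n) • (⇑(Dop J))^[n] (pderiv (j, n) u)) ⊆
      ↑(u.vars.image Prod.snd) := by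
  intro n hn
  simp only [Function.mem_support] at hn
  have hvar : (j, n) ∈ u.vars := by
    by_contra hv
    rw [pderiv_eq_zero_of_notMem_vars hv] at hn
    simp at hn
  exact Finset.mem_coe.mpr (Finset.mem_image.mpr ⟨(j, n), hvar, rfl⟩)

lemma varOp_eq_sum (j : J) (u : FormalAlg J) {N : Finset ℕ}
    (hN : u.vars.image Prod.snd ⊆ N) :
    varOp J j u = ∑ n ∈ N, ((-1 : ℂ) ^ n) • (⇑(Dop J))^[n] (pderiv (j, n) u) := by
  apply finsum_eq_sum_of_support_subset
  exact (varOp_term_support j u).trans (by exact_mod_cast hN)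

lemma varOp_hC (j : J) (d : ℕ) (u : FormalAlg J) :
    varOp J j (homogeneousComponent (d + 1) u) = homogeneousComponent d (varOp J j u) := by
  classical
  set N : Finset ℕ :=
    u.vars.image Prod.snd ∪ (homogeneousComponent (d + 1) u).vars.image Prod.snd with hNdef
  rw [varOp_eq_sum j _ (N := N) Finset.subset_union_right,
    varOp_eq_sum j u (N := N) Finset.subset_union_left, map_sum]
  refine Finset.sum_congr rfl fun n _ => ?_
  rw [LinearMap.map_smul, hC_Dop_iter, hC_pderiv]

/-- Integration by parts: `X_{j,n} · g ≡ X_{j,0} · (-D)^n g  mod Im D`. -/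
lemma X_mul_eq (j : J) : ∀ (n : ℕ) (g : FormalAlg J),
    ∃ w, X (j, n) * g =
      X (j, 0) * (((-1 : ℂ) ^ n) • (⇑(Dop J))^[n] g) + Dop J w := by
  intro n
  induction n with
  | zero => exact fun g => ⟨0, by simp⟩
  | succ n ih =>
    intro g
    obtain ⟨w, hw⟩ := ih (Dop J g)
    refine ⟨X (j, n) * g - w, ?_⟩
    have hD : Dop J (X (j, n) * g) = X (j, n) * Dop J g + g * X (j, n + 1) := by
      rw [Derivation.leibniz, Dop_X, smul_eq_mul, smul_eq_mul]
    have hsm : ((-1 : ℂ) ^ (n + 1)) • (⇑(Dop J))^[n + 1] g =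
        -(((-1 : ℂ) ^ n) • (⇑(Dop J))^[n] (Dop J g)) := by
      rw [Function.iterate_succ_apply, pow_succ, ← neg_smul, mul_neg_one]
    rw [map_sub, hD, hsm, mul_neg]
    simp only [smul_eq_C_mul] at hw ⊢
    linear_combination -hw
  
lemma X_mul_pderiv_monomial (s : (J × ℕ) →₀ ℕ) (a : ℂ) (p : J × ℕ) :
    X p * pderiv p (monomial s a) = monomial s ((s p : ℂ) * a) := by
  classical
  rw [pderiv_monomial]
  by_cases hsp : s p = 0
  · simp [hsp]
  · rw [X, monomial_mul, one_mul, mul_comm a ((s p : ℂ)),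
      add_comm (Finsupp.single p 1) (s - Finsupp.single p 1),
      sub_single_add_single s p hsp]

lemma euler_monomial (S : Finset (J × ℕ)) (s : (J × ℕ) →₀ ℕ) (hs : s.support ⊆ S) (a : ℂ) :
    ∑ p ∈ S, X p * pderiv p (monomial s a) = (s.degree : ℂ) • monomial s a := by
  classical
  have h1 : ∀ p ∈ S, X p * pderiv p (monomial s a) = monomial s ((s p : ℂ) * a) :=
    fun p _ => X_mul_pderiv_monomial s a p
  rw [Finset.sum_congr rfl h1]
  have h2 : ∑ p ∈ S, (monomial s ((s p : ℂ) * a) : FormalAlg J)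
      = monomial s ((∑ p ∈ S, (s p : ℂ)) * a) := by
    rw [Finset.sum_mul, map_sum (monomial s)]
  rw [h2]
  have h3 : ∑ p ∈ S, (s p : ℂ) = (s.degree : ℂ) := by
    rw [Finsupp.degree]
    rw [← Finset.sum_subset hs (fun x _ hx => by
      simp [Finsupp.notMem_support_iff.mp hx])]
    push_cast
    exact (Nat.cast_sum s.support fun i => s i).symm
  rw [h3, smul_monomial, smul_eq_mul]

lemma euler (q : FormalAlg J) {n : ℕ} (hq : q.IsHomogeneous n) (S : Finset (J × ℕ))
    (hS : q.vars ⊆ S) :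
    ∑ p ∈ S, X p * pderiv p q = (n : ℂ) • q := by
  classical
  have hrw : ∀ p, X p * pderiv p q
      = ∑ s ∈ q.support, X p * pderiv p (monomial s (coeff s q)) := by
    intro p
    conv_lhs => rw [q.as_sum]
    rw [map_sum, Finset.mul_sum]
  calc ∑ p ∈ S, X p * pderiv p q
      = ∑ p ∈ S, ∑ s ∈ q.support, X p * pderiv p (monomial s (coeff s q)) :=
        Finset.sum_congr rfl fun p _ => hrw p
    _ = ∑ s ∈ q.support, ∑ p ∈ S, X p * pderiv p (monomial s (coeff s q)) :=
        Finset.sum_comm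
    _ = ∑ s ∈ q.support, (n : ℂ) • monomial s (coeff s q) := by
        refine Finset.sum_congr rfl fun s hs => ?_
        have hsub : s.support ⊆ S := fun p hp =>
          hS ((mem_vars p).mpr ⟨s, hs, hp⟩)
        rw [euler_monomial S s hsub]
        have : s.degree = n := by
          rw [Finsupp.degree_eq_weight_one]
          exact hq (mem_support_iff.mp hs)
        rw [this]
    _ = (n : ℂ) • q := by
        rw [← Finset.smul_sum, ← q.as_sum]

lemma component_in_range (d : ℕ) (q : FormalAlg J) (hq : q.IsHomogeneous (d + 1))
    (hv : ∀ j, varOp J j q = 0) : ∃ w, q = Dop J w := by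
  classical
  set N : Finset ℕ := q.vars.image Prod.snd with hNdef
  set J' : Finset J := q.vars.image Prod.fst with hJ'def
  have hVsub : q.vars ⊆ J' ×ˢ N := by
    intro p hp
    exact Finset.mem_product.mpr
      ⟨Finset.mem_image.mpr ⟨p, hp, rfl⟩, Finset.mem_image.mpr ⟨p, hp, rfl⟩⟩
  have heuler := euler q hq (J' ×ˢ N) hVsub
  have key : ∀ j : J, ∃ w, ∑ n ∈ N, X (j, n) * pderiv (j, n) q = Dop J w := by
    intro j
    choose w hw using fun n => X_mul_eq j n (pderiv (j, n) q)
    refine ⟨∑ n ∈ N, w n, ?_⟩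
    have h1 : ∑ n ∈ N, X (j, n) * pderiv (j, n) q
        = X (j, 0) * (∑ n ∈ N, ((-1 : ℂ) ^ n) • (⇑(Dop J))^[n] (pderiv (j, n) q))
          + ∑ n ∈ N, Dop J (w n) := by
      rw [Finset.mul_sum, ← Finset.sum_add_distrib]
      exact Finset.sum_congr rfl fun n _ => hw n
    rw [h1, ← varOp_eq_sum j q (Finset.Subset.refl _), hv j, mul_zero, zero_add]
    exact (map_sum (Dop J) w N).symm
  choose W hW using key
  refine ⟨((d + 1 : ℕ) : ℂ)⁻¹ • ∑ j ∈ J', W j, ?_⟩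
  rw [Derivation.map_smul, map_sum (Dop J) W J']
  have hsum : ∑ j ∈ J', Dop J (W j) = ((d + 1 : ℕ) : ℂ) • q := by
    rw [← heuler, Finset.sum_product]
    exact Finset.sum_congr rfl fun j _ => (hW j).symm
  rw [hsum, smul_smul, inv_mul_cancel₀ (by exact_mod_cast Nat.succ_ne_zero d), one_smul]

end VarAux

/-- If `δ_j(u) = 0` for all `j`, then `u = D(v) + λ` for some `v ∈ A`, `λ ∈ ℂ`:
the kernel of the variational derivative equals `D(A) ⊕ ℂ·1`. -/
theorem varOp_kernel (J : Type) (u : FormalAlg J)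
    (h : ∀ j : J, varOp J j u = 0) :
    ∃ (v : FormalAlg J) (l : ℂ), u = Dop J v + C l := by
  classical
  have key : ∀ i : ℕ, ∃ w, homogeneousComponent (i + 1) u = Dop J w := by
    intro i
    apply VarAux.component_in_range i _ (homogeneousComponent_isHomogeneous _ _)
    intro j
    rw [VarAux.varOp_hC, h j, map_zero]
  choose W hW using key
  refine ⟨∑ i ∈ Finset.range u.totalDegree, W i, coeff 0 u, ?_⟩
  conv_lhs => rw [← sum_homogeneousComponent u]
  rw [Finset.sum_range_succ', homogeneousComponent_zero, map_sum (Dop J)]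
  congr 1
  exact Finset.sum_congr rfl fun i _ => hW i
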